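/- Let av(n) = av_{t73}(n) where t73 = N(N(N(L,L,L),L,L),L,L). Then av(0) = 0, av(1) = 1, av(2) = 0, and for all n ≥ 3, av(n) = Σ_{k=1}^{n-2} av(k)·av(n-k-1) + Σ_{ℓ=1}^{n-4} Σ_{m=1}^{n-ℓ-3} Σ_{k=1}^{n-ℓ-m-2} av(ℓ)·av(m)·av(k)·av(n-ℓ-m-k-1). -/
import Mathlib


inductive TTree : Type
  | L : TTree
  | N : TTree → TTree → TTree → TTree

namespace TTree

/-- `occursAtRoot t T` : the pattern `t` occurs at the root of `T`. -/
def occursAtRoot : TTree → TTree → Prop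
  | .L, _ => True
  | .N _ _ _, .L => False
  | .N p q r, .N a b c => occursAtRoot p a ∧ occursAtRoot q b ∧ occursAtRoot r c

/-- `contains t T` : the pattern `t` occurs at some vertex of `T`. -/
def contains (t : TTree) : TTree → Prop
  | .L => occursAtRoot t .L
  | .N a b c => occursAtRoot t (.N a b c) ∨ contains t a ∨ contains t b ∨ contains t c

/-- `T.avoids t` : the tree `T` avoids the pattern `t`. -/
def avoids (T t : TTree) : Prop := ¬ contains t T

/-- the number of leaves of a ternary tree -/
def leaves : TTree → ℕ
  | .L => 1
  | .N a b c => leaves a + leaves b + leaves c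

end TTree

/-- `av t n` : the number of `n`-leaf ternary trees avoiding the pattern `t` -/
noncomputable def av (t : TTree) (n : ℕ) : ℕ :=
  Set.ncard {T : TTree | T.leaves = n ∧ T.avoids t}

/-- the 7-leaf pattern `t73 = N(N(N(L,L,L),L,L),L,L)` -/
def t73 : TTree := .N (.N (.N .L .L .L) .L .L) .L .L

-- auxiliary development
deriving instance DecidableEq for TTree

namespace TTree

lemma leaves_pos : ∀ T : TTree, 1 ≤ T.leaves
  | .L => le_refl _
  | .N a b c => by
    have := leaves_pos a
    simp only [leaves]; omega

instance decOccurs : (t T : TTree) → Decidable (occursAtRoot t T)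
  | .L, _ => isTrue trivial
  | .N _ _ _, .L => isFalse id
  | .N p q r, .N a b c =>
    have := decOccurs p a
    have := decOccurs q b
    have := decOccurs r c
    inferInstanceAs (Decidable (occursAtRoot p a ∧ occursAtRoot q b ∧ occursAtRoot r c))

instance decContains : (t T : TTree) → Decidable (contains t T)
  | t, .L => inferInstanceAs (Decidable (occursAtRoot t .L))
  | t, .N a b c =>
    have := decContains t a
    have := decContains t b
    have := decContains t c
    inferInstanceAs (Decidable (occursAtRoot t (.N a b c) ∨ contains t a ∨ contains t b ∨ contains t c))

instance (T t : TTree) : Decidable (T.avoids t) :=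
  inferInstanceAs (Decidable (¬ contains t T))

end TTree

open Finset TTree

def treesD : ℕ → ℕ → Finset TTree
  | 0, _ => ∅
  | (d+1), n =>
    (if n = 1 then {TTree.L} else ∅) ∪
      (Finset.Icc 1 n ×ˢ Finset.Icc 1 n).biUnion fun p =>
        ((treesD d p.1 ×ˢ treesD d p.2) ×ˢ treesD d (n - p.1 - p.2)).image
          fun q => TTree.N q.1.1 q.1.2 q.2

lemma leaves_of_mem_treesD : ∀ d n (T : TTree), T ∈ treesD d n → T.leaves = n := by
  intro d
  induction d with
  | zero => intro n T h; simp [treesD] at h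
  | succ d ih =>
    intro n T hT
    simp only [treesD, mem_union, mem_biUnion, mem_image, mem_product] at hT
    rcases hT with h | ⟨p, hp, q, ⟨⟨h1, h2⟩, h3⟩, rfl⟩
    · split at h
      · simp at h; subst h; simp [leaves]; omega
      · simp at h
    · have e1 := ih _ _ h1
      have e2 := ih _ _ h2
      have e3 := ih _ _ h3
      have := leaves_pos q.2
      simp only [mem_product, Finset.mem_Icc] at hp
      simp only [leaves]
      omega

lemma mem_treesD_of_leaves : ∀ (T : TTree) (d n : ℕ), T.leaves = n → n ≤ d → T ∈ treesD d n := by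
  intro T
  induction T with
  | L =>
    intro d n h hd
    simp only [leaves] at h
    subst h
    match d with
    | d + 1 => simp [treesD]
  | N a b c iha ihb ihc =>
    intro d n h hd
    have ha := leaves_pos a
    have hb := leaves_pos b
    have hc := leaves_pos c
    simp only [leaves] at h
    match d with
    | 0 => omega
    | d + 1 =>
      simp only [treesD, mem_union, mem_biUnion, mem_image, mem_product]
      right
      refine ⟨(a.leaves, b.leaves), ?_, ((a, b), c), ⟨⟨?_, ?_⟩, ?_⟩, rfl⟩
      · simp only [mem_product, Finset.mem_Icc]; omega
      · exact iha _ _ rfl (by omega)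
      · exact ihb _ _ rfl (by omega)
      · have : n - a.leaves - b.leaves = c.leaves := by omega
        rw [this]
        exact ihc _ _ rfl (by omega)

def treesF (n : ℕ) : Finset TTree := treesD n n

lemma mem_treesF {T : TTree} {n : ℕ} : T ∈ treesF n ↔ T.leaves = n :=
  ⟨leaves_of_mem_treesD n n T, fun h => mem_treesD_of_leaves T n n h le_rfl⟩

lemma av_eq (t : TTree) (n : ℕ) :
    av t n = ((treesF n).filter (fun T => T.avoids t)).card := by
  unfold av
  rw [show {T : TTree | T.leaves = n ∧ T.avoids t}
      = ↑((treesF n).filter (fun T => T.avoids t)) by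
    ext T; simp [mem_treesF]]
  exact Set.ncard_coe_finset _

def Av (n : ℕ) : Finset TTree := (treesF n).filter (fun T => T.avoids t73)

lemma mem_Av {T : TTree} {n : ℕ} : T ∈ Av n ↔ T.leaves = n ∧ T.avoids t73 := by
  simp [Av, mem_filter, mem_treesF]

lemma avoids_L : TTree.L.avoids t73 := by
  simp [avoids, contains, occursAtRoot, t73]

lemma avoids_N_iff (a b c : TTree) : (TTree.N a b c).avoids t73 ↔
    (a.avoids t73 ∧ b.avoids t73 ∧ c.avoids t73) ∧
      (a = .L ∨ ∃ x y, a = .N .L x y) := by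
  have hocc : ¬ occursAtRoot t73 (TTree.N a b c) ↔ (a = .L ∨ ∃ x y, a = .N .L x y) := by
    match a with
    | .L => simp [occursAtRoot, t73]
    | .N .L x y => simp [occursAtRoot, t73]
    | .N (.N u v w) x y => simp [occursAtRoot, t73]
  unfold avoids
  simp only [contains]
  rw [not_or, not_or, not_or, hocc]
  tauto

lemma avoids_NL_iff (x y : TTree) :
    (TTree.N .L x y).avoids t73 ↔ x.avoids t73 ∧ y.avoids t73 := by
  rw [avoids_N_iff]
  simp [avoids_L]

lemma Av_eq (n : ℕ) (hn : 3 ≤ n) :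
    Av n =
      ((Finset.Icc 1 (n-2)).biUnion fun k =>
        (Av k ×ˢ Av (n-k-1)).image fun q => TTree.N .L q.1 q.2)
      ∪ ((Finset.Icc 1 (n-4)).biUnion fun l => (Finset.Icc 1 (n-l-3)).biUnion fun m =>
          (Finset.Icc 1 (n-l-m-2)).biUnion fun k =>
            ((Av l ×ˢ Av m) ×ˢ (Av k ×ˢ Av (n-l-m-k-1))).image
              fun q => TTree.N (.N .L q.1.1 q.1.2) q.2.1 q.2.2) := by
  ext T
  simp only [mem_union, mem_biUnion, mem_image, mem_product, Finset.mem_Icc, mem_Av]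
  constructor
  · rintro ⟨hl, hav⟩
    match T with
    | .L => simp only [leaves] at hl; omega
    | .N a b c =>
      rw [avoids_N_iff] at hav
      obtain ⟨⟨ha, hb, hc⟩, hshape⟩ := hav
      have hlb := leaves_pos b
      have hlc := leaves_pos c
      simp only [leaves] at hl
      rcases hshape with rfl | ⟨x, y, rfl⟩
      · left
        simp only [leaves] at hl
        refine ⟨b.leaves, ⟨by omega, by omega⟩, (b, c), ⟨⟨rfl, hb⟩,
          ⟨show c.leaves = _ by omega, hc⟩⟩, rfl⟩
      · right
        have hx := leaves_pos x
        have hy := leaves_pos y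
        rw [avoids_NL_iff] at ha
        simp only [leaves] at hl
        exact ⟨x.leaves, ⟨by omega, by omega⟩, y.leaves, ⟨by omega, by omega⟩,
          b.leaves, ⟨by omega, by omega⟩, ((x, y), (b, c)),
          ⟨⟨⟨rfl, ha.1⟩, ⟨rfl, ha.2⟩⟩, ⟨⟨rfl, hb⟩, ⟨show c.leaves = _ by omega, hc⟩⟩⟩, rfl⟩
  · rintro (⟨k, ⟨hk1, hk2⟩, ⟨b, c⟩, ⟨⟨hbl, hb⟩, ⟨hcl, hc⟩⟩, rfl⟩ |
      ⟨l, ⟨hl1, hl2⟩, m, ⟨hm1, hm2⟩, k, ⟨hk1, hk2⟩, ⟨⟨x, y⟩, ⟨b, c⟩⟩,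
        ⟨⟨⟨hxl, hx⟩, ⟨hyl, hy⟩⟩, ⟨⟨hbl, hb⟩, ⟨hcl, hc⟩⟩⟩, rfl⟩)
    · dsimp only at hbl hcl
      constructor
      · simp only [leaves]; omega
      · rw [avoids_N_iff]; exact ⟨⟨avoids_L, hb, hc⟩, Or.inl rfl⟩
    · dsimp only at hxl hyl hbl hcl
      constructor
      · simp only [leaves]; omega
      · rw [avoids_N_iff]
        exact ⟨⟨(avoids_NL_iff x y).2 ⟨hx, hy⟩, hb, hc⟩, Or.inr ⟨x, y, rfl⟩⟩

lemma inj1 : Function.Injective (fun q : TTree × TTree => TTree.N .L q.1 q.2) := by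
  rintro ⟨a, b⟩ ⟨c, d⟩ h
  rw [TTree.N.injEq] at h
  obtain ⟨-, rfl, rfl⟩ := h
  rfl

lemma inj2 : Function.Injective
    (fun q : (TTree × TTree) × (TTree × TTree) =>
      TTree.N (.N .L q.1.1 q.1.2) q.2.1 q.2.2) := by
  rintro ⟨⟨a, b⟩, ⟨c, d⟩⟩ ⟨⟨a', b'⟩, ⟨c', d'⟩⟩ h
  rw [TTree.N.injEq, TTree.N.injEq] at h
  obtain ⟨⟨-, rfl, rfl⟩, rfl, rfl⟩ := h
  rfl

lemma shape_first {k r : ℕ} {T : TTree}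
    (h : T ∈ (Av k ×ˢ Av r).image fun q => TTree.N .L q.1 q.2) :
    ∃ b c, T = .N .L b c ∧ b.leaves = k := by
  simp only [mem_image, mem_product, mem_Av] at h
  obtain ⟨⟨b, c⟩, ⟨⟨hb, -⟩, -⟩, rfl⟩ := h
  exact ⟨b, c, rfl, hb⟩

lemma shape_second {l m k r : ℕ} {T : TTree}
    (h : T ∈ ((Av l ×ˢ Av m) ×ˢ (Av k ×ˢ Av r)).image
      fun q => TTree.N (.N .L q.1.1 q.1.2) q.2.1 q.2.2) :
    ∃ x y b c, T = .N (.N .L x y) b c ∧ x.leaves = l ∧ y.leaves = m ∧ b.leaves = k := by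
  simp only [mem_image, mem_product, mem_Av] at h
  obtain ⟨⟨⟨x, y⟩, ⟨b, c⟩⟩, ⟨⟨⟨hx, -⟩, ⟨hy, -⟩⟩, ⟨⟨hb, -⟩, -⟩⟩, rfl⟩ := h
  exact ⟨x, y, b, c, rfl, hx, hy, hb⟩

lemma card_Av (n : ℕ) (hn : 3 ≤ n) :
    (Av n).card =
      (∑ k ∈ Finset.Icc 1 (n - 2), (Av k).card * (Av (n - k - 1)).card) +
        ∑ l ∈ Finset.Icc 1 (n - 4), ∑ m ∈ Finset.Icc 1 (n - l - 3),
          ∑ k ∈ Finset.Icc 1 (n - l - m - 2),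
            (Av l).card * (Av m).card * (Av k).card * (Av (n - l - m - k - 1)).card := by
  have hdisj1 : ∀ k ∈ Finset.Icc 1 (n - 2), ∀ k' ∈ Finset.Icc 1 (n - 2), k ≠ k' →
      Disjoint ((Av k ×ˢ Av (n - k - 1)).image fun q => TTree.N .L q.1 q.2)
        ((Av k' ×ˢ Av (n - k' - 1)).image fun q => TTree.N .L q.1 q.2) := by
    intro k _ k' _ hkk'
    rw [Finset.disjoint_left]
    intro T h1 h2
    obtain ⟨b, c, rfl, hb⟩ := shape_first h1
    obtain ⟨b', c', he, hb'⟩ := shape_first h2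
    rw [TTree.N.injEq] at he
    obtain ⟨-, rfl, rfl⟩ := he
    exact hkk' (by omega)
  have hinner : ∀ l m : ℕ, ∀ k ∈ Finset.Icc 1 (n - l - m - 2),
      ∀ k' ∈ Finset.Icc 1 (n - l - m - 2), k ≠ k' →
      Disjoint (((Av l ×ˢ Av m) ×ˢ (Av k ×ˢ Av (n - l - m - k - 1))).image
          fun q => TTree.N (.N .L q.1.1 q.1.2) q.2.1 q.2.2)
        (((Av l ×ˢ Av m) ×ˢ (Av k' ×ˢ Av (n - l - m - k' - 1))).image
          fun q => TTree.N (.N .L q.1.1 q.1.2) q.2.1 q.2.2) := by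
    intro l m k _ k' _ hkk'
    rw [Finset.disjoint_left]
    intro T h1 h2
    obtain ⟨x, y, b, c, rfl, -, -, hb⟩ := shape_second h1
    obtain ⟨x', y', b', c', he, -, -, hb'⟩ := shape_second h2
    rw [TTree.N.injEq, TTree.N.injEq] at he
    obtain ⟨⟨-, rfl, rfl⟩, rfl, rfl⟩ := he
    exact hkk' (by omega)
  have hmid : ∀ l : ℕ, ∀ m ∈ Finset.Icc 1 (n - l - 3), ∀ m' ∈ Finset.Icc 1 (n - l - 3),
      m ≠ m' →
      Disjoint ((Finset.Icc 1 (n - l - m - 2)).biUnion fun k =>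
          ((Av l ×ˢ Av m) ×ˢ (Av k ×ˢ Av (n - l - m - k - 1))).image
            fun q => TTree.N (.N .L q.1.1 q.1.2) q.2.1 q.2.2)
        ((Finset.Icc 1 (n - l - m' - 2)).biUnion fun k =>
          ((Av l ×ˢ Av m') ×ˢ (Av k ×ˢ Av (n - l - m' - k - 1))).image
            fun q => TTree.N (.N .L q.1.1 q.1.2) q.2.1 q.2.2) := by
    intro l m _ m' _ hmm'
    rw [Finset.disjoint_left]
    intro T h1 h2
    rw [Finset.mem_biUnion] at h1 h2
    obtain ⟨k, -, h1⟩ := h1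
    obtain ⟨k', -, h2⟩ := h2
    obtain ⟨x, y, b, c, rfl, -, hy, -⟩ := shape_second h1
    obtain ⟨x', y', b', c', he, -, hy', -⟩ := shape_second h2
    rw [TTree.N.injEq, TTree.N.injEq] at he
    obtain ⟨⟨-, rfl, rfl⟩, rfl, rfl⟩ := he
    exact hmm' (by omega)
  have houter : ∀ l ∈ Finset.Icc 1 (n - 4), ∀ l' ∈ Finset.Icc 1 (n - 4), l ≠ l' →
      Disjoint ((Finset.Icc 1 (n - l - 3)).biUnion fun m =>
          (Finset.Icc 1 (n - l - m - 2)).biUnion fun k =>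
            ((Av l ×ˢ Av m) ×ˢ (Av k ×ˢ Av (n - l - m - k - 1))).image
              fun q => TTree.N (.N .L q.1.1 q.1.2) q.2.1 q.2.2)
        ((Finset.Icc 1 (n - l' - 3)).biUnion fun m =>
          (Finset.Icc 1 (n - l' - m - 2)).biUnion fun k =>
            ((Av l' ×ˢ Av m) ×ˢ (Av k ×ˢ Av (n - l' - m - k - 1))).image
              fun q => TTree.N (.N .L q.1.1 q.1.2) q.2.1 q.2.2) := by
    intro l _ l' _ hll'
    rw [Finset.disjoint_left]
    intro T h1 h2
    rw [Finset.mem_biUnion] at h1 h2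
    obtain ⟨m, -, h1⟩ := h1
    obtain ⟨m', -, h2⟩ := h2
    rw [Finset.mem_biUnion] at h1 h2
    obtain ⟨k, -, h1⟩ := h1
    obtain ⟨k', -, h2⟩ := h2
    obtain ⟨x, y, b, c, rfl, hx, -, -⟩ := shape_second h1
    obtain ⟨x', y', b', c', he, hx', -, -⟩ := shape_second h2
    rw [TTree.N.injEq, TTree.N.injEq] at he
    obtain ⟨⟨-, rfl, rfl⟩, rfl, rfl⟩ := he
    exact hll' (by omega)
  have hU : Disjoint
      ((Finset.Icc 1 (n - 2)).biUnion fun k =>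
        (Av k ×ˢ Av (n - k - 1)).image fun q => TTree.N .L q.1 q.2)
      ((Finset.Icc 1 (n - 4)).biUnion fun l => (Finset.Icc 1 (n - l - 3)).biUnion fun m =>
        (Finset.Icc 1 (n - l - m - 2)).biUnion fun k =>
          ((Av l ×ˢ Av m) ×ˢ (Av k ×ˢ Av (n - l - m - k - 1))).image
            fun q => TTree.N (.N .L q.1.1 q.1.2) q.2.1 q.2.2) := by
    rw [Finset.disjoint_left]
    intro T h1 h2
    rw [Finset.mem_biUnion] at h1 h2
    obtain ⟨k, -, h1⟩ := h1
    obtain ⟨l, -, h2⟩ := h2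
    rw [Finset.mem_biUnion] at h2
    obtain ⟨m, -, h2⟩ := h2
    rw [Finset.mem_biUnion] at h2
    obtain ⟨k', -, h2⟩ := h2
    obtain ⟨b, c, rfl, -⟩ := shape_first h1
    obtain ⟨x', y', b', c', he, -, -, -⟩ := shape_second h2
    rw [TTree.N.injEq] at he
    exact absurd he.1 (by simp)
  rw [Av_eq n hn, Finset.card_union_of_disjoint hU]
  congr 1
  · rw [Finset.card_biUnion hdisj1]
    refine Finset.sum_congr rfl fun k _ => ?_
    rw [Finset.card_image_of_injective _ inj1, Finset.card_product]
  · rw [Finset.card_biUnion houter]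
    refine Finset.sum_congr rfl fun l _ => ?_
    rw [Finset.card_biUnion (hmid l)]
    refine Finset.sum_congr rfl fun m _ => ?_
    rw [Finset.card_biUnion (hinner l m)]
    refine Finset.sum_congr rfl fun k _ => ?_
    rw [Finset.card_image_of_injective _ inj2, Finset.card_product,
      Finset.card_product, Finset.card_product]
    ring

/-- Recurrence for the avoidance sequence of `t73`. -/
theorem av_t73_recurrence :
    av t73 0 = 0 ∧ av t73 1 = 1 ∧ av t73 2 = 0 ∧
    ∀ n : ℕ, 3 ≤ n →
      av t73 n =
        (∑ k ∈ Finset.Icc 1 (n - 2), av t73 k * av t73 (n - k - 1)) +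
          ∑ l ∈ Finset.Icc 1 (n - 4), ∑ m ∈ Finset.Icc 1 (n - l - 3),
            ∑ k ∈ Finset.Icc 1 (n - l - m - 2),
              av t73 l * av t73 m * av t73 k * av t73 (n - l - m - k - 1) := by

  have hav : ∀ n, av t73 n = (Av n).card := fun n => av_eq t73 n
  refine ⟨?_, ?_, ?_, ?_⟩
  · rw [hav]; decide
  · rw [hav]; decide
  · rw [hav]; decide
  · intro n hn
    simp only [hav]
    exact card_Av n hn
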